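/- Let p > 3 be a prime, let v be the smallest positive integer that is a quadratic non-residue modulo p, and let G = Φ₄₁(1⁶) be the group of order p⁶ with presentation on generators α₁, α₂, β, β₁, β₂, γ and relations [α₁,α₂] = β, [β,α₁] = β₁, [β,α₂] = β₂, [α₁,β₁] = γ, [α₂,β₂] = γ^(−v), α₁ᵖ = α₂ᵖ = βᵖ = β₁ᵖ = β₂ᵖ = γᵖ = 1, with every commutator of a pair of generators not listed among these relations declared trivial. Then the Bogomolov multiplier B₀(G) is trivial. -/

import Mathlib

/-!
Φ₄₁(1⁶): v is the smallest positive quadratic non-residue mod p; relations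
[α₁,α₂]=β, [β,α₁]=β₁, [β,α₂]=β₂, [α₁,β₁]=γ, [α₂,β₂]=γ^(−v), all pth powers trivial.
-/

namespace Stmt14

/-- The additive group `ℚ/ℤ`. -/
abbrev QZ : Type := ℚ ⧸ AddSubgroup.zmultiples (1 : ℚ)

/-- An inhomogeneous 2-cocycle on `G` with values in `ℚ/ℤ` (trivial `G`-action). -/
def IsTwoCocycle {G : Type} [Group G] (f : G → G → QZ) : Prop :=
  ∀ g h j : G, f h j - f (g * h) j + f g (h * j) - f g h = 0

/-- An inhomogeneous 2-coboundary on `G` with values in `ℚ/ℤ` (trivial `G`-action). -/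
def IsTwoCoboundary {G : Type} [Group G] (f : G → G → QZ) : Prop :=
  ∃ c : G → QZ, ∀ g h : G, f g h = c h - c (g * h) + c g

/-- A subgroup is bicyclic if it is abelian and generated by at most two elements
(equivalently, cyclic or a direct product of two cyclic groups). -/
def IsBicyclic {G : Type} [Group G] (A : Subgroup G) : Prop :=
  (∀ x y : A, x * y = y * x) ∧ ∃ a b : G, A = Subgroup.closure {a, b}

/-- The Bogomolov multiplier `B₀(G) ⊆ H²(G, ℚ/ℤ)` is trivial, phrased at the level of
2-cocycles: every 2-cocycle whose restriction to each bicyclic subgroup is a coboundary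
(i.e. whose class restricts to zero on each bicyclic subgroup) is itself a coboundary
(i.e. its class is zero). -/
def BogomolovMultiplierIsTrivial (G : Type) [Group G] : Prop :=
  ∀ f : G → G → QZ, IsTwoCocycle f →
    (∀ A : Subgroup G, IsBicyclic A → IsTwoCoboundary (fun a b : ↥A => f ↑a ↑b)) →
    IsTwoCoboundary f

/-- The Bogomolov multiplier `B₀(G) ⊆ H²(G, ℚ/ℤ)` is nontrivial, phrased at the level of
2-cocycles. -/
def BogomolovMultiplierIsNontrivial (G : Type) [Group G] : Prop :=
  ∃ f : G → G → QZ, IsTwoCocycle f ∧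
    (∀ A : Subgroup G, IsBicyclic A → IsTwoCoboundary (fun a b : ↥A => f ↑a ↑b)) ∧
    ¬ IsTwoCoboundary f

/-- The generators. -/
inductive Gen | a1 | a2 | b | b1 | b2 | g

open FreeGroup

/-- The commutator `[x,y] = x⁻¹y⁻¹xy`. -/
def c (x y : FreeGroup Gen) : FreeGroup Gen := x⁻¹ * y⁻¹ * x * y

/-- The defining relators. -/
def rels (p : ℕ) (v : ℕ) : Set (FreeGroup Gen) :=
  { c (of .a1) (of .a2) * (of Gen.b)⁻¹,
    c (of .b) (of .a1) * (of Gen.b1)⁻¹,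
    c (of .b) (of .a2) * (of Gen.b2)⁻¹,
    c (of .a1) (of .b1) * (of Gen.g)⁻¹,
    c (of .a2) (of .b2) * ((of Gen.g) ^ (-(v : ℤ)))⁻¹,
    c (of .a1) (of .b2),
    c (of .a1) (of .g),
    c (of .a2) (of .b1),
    c (of .a2) (of .g),
    c (of .b) (of .b1),
    c (of .b) (of .b2),
    c (of .b) (of .g),
    c (of .b1) (of .b2),
    c (of .b1) (of .g),
    c (of .b2) (of .g),
    (of Gen.a1) ^ p,
    (of Gen.a2) ^ p,
    (of Gen.b) ^ p,
    (of Gen.b1) ^ p,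
    (of Gen.b2) ^ p,
    (of Gen.g) ^ p }


/-! ### Auxiliary machinery -/

section CommutatorCalculus

variable {H : Type*} [Group H]

/-- our commutator convention -/
def K (x y : H) : H := x⁻¹ * y⁻¹ * x * y

lemma K_eq (x y : H) : K x y = (y*x)⁻¹ * (x*y) := by unfold K; group

lemma K_eq_one_iff {x y : H} : K x y = 1 ↔ Commute x y := by
  rw [K_eq, inv_mul_eq_one]
  exact ⟨fun h => h.symm, fun h => h.symm⟩

lemma K_inv (x y : H) : (K x y)⁻¹ = K y x := by unfold K; group

lemma K_mul_right (x u w : H) : K x (u*w) = K x w * (w⁻¹ * K x u * w) := by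
  unfold K; group

lemma K_mul_left (x y u : H) : K (x*y) u = (y⁻¹ * K x u * y) * K y u := by
  unfold K; group

lemma conj_eq_self {x t : H} (h : Commute t x) : x⁻¹ * t * x = t := by
  rw [mul_assoc, h.eq, ← mul_assoc, inv_mul_cancel, one_mul]

lemma conj_K (x t : H) : x⁻¹ * t * x = t * K t x := by unfold K; group

lemma K_one_left (u : H) : K 1 u = 1 := by unfold K; group

lemma K_map {H₂ : Type*} [Group H₂] (φ : H →* H₂) (x y : H) :
    φ (K x y) = K (φ x) (φ y) := by simp [K, map_mul, map_inv]

lemma K_pow_right {x u : H} (hc : ∀ t, Commute (K x u) t) :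
    ∀ n : ℕ, K x (u^n) = (K x u)^n := by
  intro n
  induction n with
  | zero => simp [K]
  | succ n ih =>
      rw [pow_succ, K_mul_right, ih, conj_eq_self ((hc u).pow_left n), pow_succ']

lemma K_pow_left {x u : H} (h : Commute x (K x u)) :
    ∀ n : ℕ, K (x^n) u = (K x u)^n := by
  intro n
  induction n with
  | zero => simp [K_one_left]
  | succ n ih =>
      rw [pow_succ, K_mul_left, ih, conj_eq_self (h.symm.pow_left n)]
      exact (pow_succ _ _).symm

lemma K_mul_mul {x y u w : H} (hxw : Commute x w) (hyu : Commute y u)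
    (hxu : ∀ t, Commute (K x u) t) :
    K (x*y) (u*w) = K x u * K y w := by
  have h1 : K x (u*w) = K x u := by
    rw [K_mul_right, K_eq_one_iff.mpr hxw, one_mul, conj_eq_self (hxu w)]
  have h2 : K y (u*w) = K y w := by
    rw [K_mul_right, K_eq_one_iff.mpr hyu]
    simp
  rw [K_mul_left, h1, h2, conj_eq_self (hxu y)]

lemma conj_mulH (x s t : H) : x⁻¹*(s*t)*x = (x⁻¹*s*x)*(x⁻¹*t*x) := by group

lemma conj_invH (x s : H) : x⁻¹*s⁻¹*x = (x⁻¹*s*x)⁻¹ := by group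

lemma conj_powH (x s : H) : ∀ n : ℕ, x⁻¹*(s^n)*x = (x⁻¹*s*x)^n := by
  intro n
  induction n with
  | zero => simp
  | succ n ih => rw [pow_succ, conj_mulH, ih, pow_succ]

lemma juggle {M : Type*} [CommGroup M] (X Y Z : M) (n C2 C3 : ℕ) :
    (X*Y)^n * (Y*Z⁻¹)^C2 * (Z^C3)⁻¹ * X
      = X^(n+1) * Y^(n+C2) * (Z^(C2+C3))⁻¹ := by
  simp [pow_succ, pow_add, mul_pow, mul_inv, mul_comm, mul_left_comm, mul_assoc]

lemma juggleH {b b1 cc : H} (h1 : Commute b b1) (h2 : Commute b cc) (h3 : Commute b1 cc)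
    (n C2 C3 : ℕ) :
    (b*b1)^n * (b1*cc⁻¹)^C2 * (cc^C3)⁻¹ * b = b^(n+1) * b1^(n+C2) * (cc^(C2+C3))⁻¹ := by
  have hcomm : ∀ x ∈ ({b, b1, cc} : Set H), ∀ y ∈ ({b, b1, cc} : Set H), x * y = y * x := by
    intro x hx y hy
    rcases hx with rfl | rfl | rfl <;> rcases hy with rfl | rfl | rfl <;>
      first
        | rfl
        | exact h1.eq | exact h2.eq | exact h3.eq
        | exact h1.symm.eq | exact h2.symm.eq | exact h3.symm.eq
  letI := Subgroup.closureCommGroupOfComm hcomm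
  have hbM : b ∈ Subgroup.closure ({b, b1, cc} : Set H) := Subgroup.subset_closure (by simp)
  have hb1M : b1 ∈ Subgroup.closure ({b, b1, cc} : Set H) := Subgroup.subset_closure (by simp)
  have hccM : cc ∈ Subgroup.closure ({b, b1, cc} : Set H) := Subgroup.subset_closure (by simp)
  have key := juggle (⟨b, hbM⟩ : Subgroup.closure ({b, b1, cc} : Set H))
    ⟨b1, hb1M⟩ ⟨cc, hccM⟩ n C2 C3
  simpa using congrArg Subtype.val key

lemma K_pow_left₃ {x u : H} (hbb1 : Commute (K x u) (K (K x u) x))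
    (hc : ∀ t, Commute (K x (K (K x u) x)) t) :
    ∀ n : ℕ, K (x^n) u
      = (K x u)^n * (K (K x u) x)^(n.choose 2) * ((K x (K (K x u) x))^(n.choose 3))⁻¹ := by
  set b := K x u with hb
  set b1 := K b x with hb1
  set cc := K x b1 with hcc
  have hconjb : x⁻¹ * b * x = b * b1 := conj_K x b
  have hconjb1 : x⁻¹ * b1 * x = b1 * cc⁻¹ := by rw [conj_K, ← K_inv]
  have hconjcc : x⁻¹ * cc * x = cc := conj_eq_self (hc x)
  intro n
  induction n with
  | zero => simp [K_one_left]
  | succ n ih =>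
      rw [pow_succ, K_mul_left, ih]
      have expand : x⁻¹ * (b^(n) * b1^(n.choose 2) * (cc^(n.choose 3))⁻¹) * x
          = (b*b1)^n * (b1*cc⁻¹)^(n.choose 2) * ((cc^(n.choose 3))⁻¹) := by
        rw [conj_mulH, conj_mulH, conj_invH, conj_powH, conj_powH, conj_powH,
          hconjb, hconjb1, hconjcc]
      rw [expand, Nat.choose_succ_succ' n 1, Nat.choose_one_right, Nat.choose_succ_succ' n 2]
      exact juggleH hbb1 (hc b).symm (hc b1).symm n (n.choose 2) (n.choose 3)

end CommutatorCalculus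

section ExtGroup

/-- divisibility of `ℚ/ℤ` -/
lemma QZ.exists_nsmul (n : ℕ) (hn : n ≠ 0) (z : QZ) : ∃ x : QZ, n • x = z := by
  have hs : Function.Surjective (QuotientAddGroup.mk' (AddSubgroup.zmultiples (1 : ℚ))) :=
    QuotientAddGroup.mk'_surjective _
  obtain ⟨q, rfl⟩ := hs z
  refine ⟨QuotientAddGroup.mk' _ (q / n), ?_⟩
  rw [← map_nsmul]
  congr 1
  rw [nsmul_eq_mul, mul_div_cancel₀ _ (Nat.cast_ne_zero.mpr hn)]

/-- data of a normalized 2-cocycle, symmetric on commuting pairs -/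
structure CD (G : Type) [Group G] where
  f : G → G → QZ
  coc : IsTwoCocycle f
  norm1 : ∀ g, f 1 g = 0
  norm2 : ∀ g, f g 1 = 0
  symm : ∀ g h, g * h = h * g → f g h = f h g

variable {G : Type} [Group G]

lemma CD.finv (D : CD G) (g : G) : D.f g⁻¹ g = D.f g g⁻¹ := by
  have h := D.coc g g⁻¹ g
  simp only [mul_inv_cancel, inv_mul_cancel, D.norm1, D.norm2] at h
  have h2 : D.f g⁻¹ g - D.f g g⁻¹ = 0 := by rw [← h]; abel
  exact sub_eq_zero.mp h2

/-- the central extension associated to a cocycle -/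
@[ext] structure Ext (D : CD G) where
  fst : QZ
  snd : G

variable {D : CD G}

instance : Group (Ext D) where
  mul e₁ e₂ := ⟨e₁.fst + e₂.fst + D.f e₁.snd e₂.snd, e₁.snd * e₂.snd⟩
  one := ⟨0, 1⟩
  inv e := ⟨-e.fst - D.f e.snd e.snd⁻¹, e.snd⁻¹⟩
  mul_assoc a b c := by
    refine Ext.ext ?_ (mul_assoc _ _ _)
    show a.fst + b.fst + D.f a.snd b.snd + c.fst + D.f (a.snd * b.snd) c.snd
       = a.fst + (b.fst + c.fst + D.f b.snd c.snd) + D.f a.snd (b.snd * c.snd)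
    have h := D.coc a.snd b.snd c.snd
    refine sub_eq_zero.mp ?_
    calc a.fst + b.fst + D.f a.snd b.snd + c.fst + D.f (a.snd * b.snd) c.snd
          - (a.fst + (b.fst + c.fst + D.f b.snd c.snd) + D.f a.snd (b.snd * c.snd))
        = -(D.f b.snd c.snd - D.f (a.snd * b.snd) c.snd
            + D.f a.snd (b.snd * c.snd) - D.f a.snd b.snd) := by abel
      _ = 0 := by rw [h]; simp
  one_mul a := by
    refine Ext.ext ?_ (one_mul _)
    show 0 + a.fst + D.f 1 a.snd = a.fst
    rw [D.norm1]; abel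
  mul_one a := by
    refine Ext.ext ?_ (mul_one _)
    show a.fst + 0 + D.f a.snd 1 = a.fst
    rw [D.norm2]; abel
  inv_mul_cancel a := by
    refine Ext.ext ?_ (inv_mul_cancel _)
    show -a.fst - D.f a.snd a.snd⁻¹ + a.fst + D.f a.snd⁻¹ a.snd = 0
    rw [D.finv]; abel

lemma Ext.mul_def (x y : Ext D) :
    x * y = ⟨x.fst + y.fst + D.f x.snd y.snd, x.snd * y.snd⟩ := rfl

lemma Ext.one_def : (1 : Ext D) = ⟨0, 1⟩ := rfl

/-- projection to `G` as a hom -/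
def Ext.π : Ext D →* G where
  toFun := Ext.snd
  map_one' := rfl
  map_mul' _ _ := rfl

lemma Ext.keyE {x y : Ext D} (h : Commute (Ext.π x) (Ext.π y)) : Commute x y := by
  show x * y = y * x
  refine Ext.ext ?_ h
  show x.fst + y.fst + D.f x.snd y.snd = y.fst + x.fst + D.f y.snd x.snd
  rw [D.symm x.snd y.snd h]; abel

/-- central injection of `ℚ/ℤ` -/
def Ext.ctr (z : QZ) : Ext D := ⟨z, 1⟩

lemma Ext.ctr_comm (z : QZ) (t : Ext D) : Commute (Ext.ctr z) t :=
  Ext.keyE (by show (1 : G) * _ = _ * (1 : G); simp)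

lemma Ext.ctr_mul (z w : QZ) : (Ext.ctr z : Ext D) * Ext.ctr w = Ext.ctr (z + w) := by
  refine Ext.ext ?_ (one_mul _)
  show z + w + D.f 1 1 = z + w
  rw [D.norm1]; abel

lemma Ext.ctr_pow (z : QZ) (n : ℕ) : (Ext.ctr z : Ext D)^n = Ext.ctr (n • z) := by
  induction n with
  | zero => simp [Ext.ctr, Ext.one_def]
  | succ n ih =>
      rw [pow_succ, ih, Ext.ctr_mul, succ_nsmul]

lemma Ext.ctr_mul_pow (z : QZ) (x : Ext D) (n : ℕ) :
    (Ext.ctr z * x)^n = Ext.ctr (n • z) * x^n := by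
  rw [(Ext.ctr_comm z x).mul_pow, Ext.ctr_pow]

end ExtGroup

section Symm

/-- two commuting elements generate a bicyclic subgroup, hence the cocycle is symmetric there -/
lemma symm_of_bicyclic {G : Type} [Group G] {f : G → G → QZ}
    (hb : ∀ A : Subgroup G, IsBicyclic A → IsTwoCoboundary (fun a b : ↥A => f ↑a ↑b))
    {g h : G} (hc : g * h = h * g) : f g h = f h g := by
  have base : ∀ x ∈ ({g, h} : Set G), ∀ y ∈ ({g, h} : Set G), Commute x y := by
    intro x hx y hy
    rcases hx with rfl | rfl <;> rcases hy with rfl | rfl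
    · exact Commute.refl _
    · exact hc
    · exact hc.symm
    · exact Commute.refl _
  have claim : ∀ x y : G, x ∈ Subgroup.closure ({g, h} : Set G) →
      y ∈ Subgroup.closure ({g, h} : Set G) → Commute x y := by
    intro x y hx hy
    refine Subgroup.closure_induction₂ (p := fun a b _ _ => Commute a b)
      (fun a b ha hb => base a ha b hb)
      (fun a _ => Commute.one_left a) (fun a _ => Commute.one_right a)
      (fun _ _ _ _ _ _ h1 h2 => h1.mul_left h2)
      (fun _ _ _ _ _ _ h1 h2 => h1.mul_right h2)
      (fun _ _ _ _ h1 => h1.inv_left)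
      (fun _ _ _ _ h1 => h1.inv_right) hx hy
  have hmemg : g ∈ Subgroup.closure ({g, h} : Set G) := Subgroup.subset_closure (by simp)
  have hmemh : h ∈ Subgroup.closure ({g, h} : Set G) := Subgroup.subset_closure (by simp)
  have hbic : IsBicyclic (Subgroup.closure ({g, h} : Set G)) := by
    refine ⟨fun x y => Subtype.ext ?_, g, h, rfl⟩
    exact claim _ _ x.2 y.2
  obtain ⟨d, hd⟩ := hb _ hbic
  have h1 := hd ⟨g, hmemg⟩ ⟨h, hmemh⟩
  have h2 := hd ⟨h, hmemh⟩ ⟨g, hmemg⟩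
  have heq : (⟨g, hmemg⟩ * ⟨h, hmemh⟩ : Subgroup.closure ({g, h} : Set G))
      = ⟨h, hmemh⟩ * ⟨g, hmemg⟩ := Subtype.ext hc
  simp only at h1 h2
  rw [h1, h2, heq]
  abel

end Symm

theorem bogomolov_trivial_Phi41 (p : ℕ) (hp : p.Prime) (h3 : 3 < p) (v : ℕ) (hv : 0 < v)
    (hvnr : ¬ IsSquare (v : ZMod p))
    (hvmin : ∀ w : ℕ, 0 < w → w < v → IsSquare (w : ZMod p))
    (hcard : Nat.card (PresentedGroup (rels p v)) = p ^ 6) :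
    BogomolovMultiplierIsTrivial (PresentedGroup (rels p v)) := by
  intro f hf hball
  -- symmetry of f on commuting pairs
  have hsy : ∀ g h : PresentedGroup (rels p v), g * h = h * g → f g h = f h g :=
    fun g h hc => symm_of_bicyclic hball hc
  -- normalization facts
  have hf1g : ∀ g : PresentedGroup (rels p v), f 1 g = f 1 1 := by
    intro g
    have h := hf 1 1 g
    rw [one_mul, one_mul] at h
    have h2 : f 1 g - f 1 1 = 0 := by rw [← h]; abel
    exact sub_eq_zero.mp h2
  have hfg1 : ∀ g : PresentedGroup (rels p v), f g 1 = f 1 1 := by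
    intro g
    have h := hf g 1 1
    rw [mul_one, one_mul] at h
    have h2 : f 1 1 - f g 1 = 0 := by rw [← h]; abel
    exact (sub_eq_zero.mp h2).symm
  -- the normalized cocycle data
  have hDcoc : IsTwoCocycle (fun g h : PresentedGroup (rels p v) => f g h - f 1 1) := by
    intro g h j
    have h0 := hf g h j
    have h1 : (f h j - f 1 1) - (f (g*h) j - f 1 1) + (f g (h*j) - f 1 1) - (f g h - f 1 1)
        = f h j - f (g*h) j + f g (h*j) - f g h := by abel
    rw [h1, h0]
  set D : CD (PresentedGroup (rels p v)) :=
    { f := fun g h => f g h - f 1 1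
      coc := hDcoc
      norm1 := fun g => by show f 1 g - f 1 1 = 0; rw [hf1g g]; exact sub_self _
      norm2 := fun g => by show f g 1 - f 1 1 = 0; rw [hfg1 g]; exact sub_self _
      symm := fun g h hc => by show f g h - f 1 1 = f h g - f 1 1; rw [hsy g h hc] }
    with hD
  -- generators
  set a1 : PresentedGroup (rels p v) := PresentedGroup.of Gen.a1 with ha1v
  set a2 : PresentedGroup (rels p v) := PresentedGroup.of Gen.a2 with ha2v
  set bb : PresentedGroup (rels p v) := PresentedGroup.of Gen.b with hbbv
  set b1 : PresentedGroup (rels p v) := PresentedGroup.of Gen.b1 with hb1v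
  set b2 : PresentedGroup (rels p v) := PresentedGroup.of Gen.b2 with hb2v
  set gg : PresentedGroup (rels p v) := PresentedGroup.of Gen.g with hggv
  -- relator consequences
  have hmk : ∀ r ∈ rels p v, PresentedGroup.mk (rels p v) r = 1 :=
    fun r hr => (QuotientGroup.eq_one_iff r).mpr (Subgroup.subset_normalClosure hr)
  have hcK : ∀ x y : Gen, PresentedGroup.mk (rels p v) (c (FreeGroup.of x) (FreeGroup.of y))
      = K (PresentedGroup.of x) (PresentedGroup.of y) := by
    intro x y
    simp only [c, K, _root_.map_mul, _root_.map_inv]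
    rfl
  have mem1 : (c (FreeGroup.of .a1) (FreeGroup.of .a2) * (FreeGroup.of Gen.b)⁻¹) ∈ rels p v := by
    unfold rels
    exact Set.mem_insert _ _
  have mem2 : (c (FreeGroup.of .b) (FreeGroup.of .a1) * (FreeGroup.of Gen.b1)⁻¹) ∈ rels p v := by
    unfold rels
    exact Set.mem_insert_of_mem _ (Set.mem_insert _ _)
  have mem3 : (c (FreeGroup.of .b) (FreeGroup.of .a2) * (FreeGroup.of Gen.b2)⁻¹) ∈ rels p v := by
    unfold rels
    exact Set.mem_insert_of_mem _ (Set.mem_insert_of_mem _ (Set.mem_insert _ _))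
  have mem4 : (c (FreeGroup.of .a1) (FreeGroup.of .b1) * (FreeGroup.of Gen.g)⁻¹) ∈ rels p v := by
    unfold rels
    exact Set.mem_insert_of_mem _ (Set.mem_insert_of_mem _ (Set.mem_insert_of_mem _ (Set.mem_insert _ _)))
  have mem5 : (c (FreeGroup.of .a2) (FreeGroup.of .b2) * ((FreeGroup.of Gen.g) ^ (-(v : ℤ)))⁻¹) ∈ rels p v := by
    unfold rels
    exact Set.mem_insert_of_mem _ (Set.mem_insert_of_mem _ (Set.mem_insert_of_mem _ (Set.mem_insert_of_mem _ (Set.mem_insert _ _))))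
  have mem6 : (c (FreeGroup.of .a1) (FreeGroup.of .b2)) ∈ rels p v := by
    unfold rels
    exact Set.mem_insert_of_mem _ (Set.mem_insert_of_mem _ (Set.mem_insert_of_mem _ (Set.mem_insert_of_mem _ (Set.mem_insert_of_mem _ (Set.mem_insert _ _)))))
  have mem7 : (c (FreeGroup.of .a1) (FreeGroup.of .g)) ∈ rels p v := by
    unfold rels
    exact Set.mem_insert_of_mem _ (Set.mem_insert_of_mem _ (Set.mem_insert_of_mem _ (Set.mem_insert_of_mem _ (Set.mem_insert_of_mem _ (Set.mem_insert_of_mem _ (Set.mem_insert _ _))))))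
  have mem8 : (c (FreeGroup.of .a2) (FreeGroup.of .b1)) ∈ rels p v := by
    unfold rels
    exact Set.mem_insert_of_mem _ (Set.mem_insert_of_mem _ (Set.mem_insert_of_mem _ (Set.mem_insert_of_mem _ (Set.mem_insert_of_mem _ (Set.mem_insert_of_mem _ (Set.mem_insert_of_mem _ (Set.mem_insert _ _)))))))
  have mem9 : (c (FreeGroup.of .a2) (FreeGroup.of .g)) ∈ rels p v := by
    unfold rels
    exact Set.mem_insert_of_mem _ (Set.mem_insert_of_mem _ (Set.mem_insert_of_mem _ (Set.mem_insert_of_mem _ (Set.mem_insert_of_mem _ (Set.mem_insert_of_mem _ (Set.mem_insert_of_mem _ (Set.mem_insert_of_mem _ (Set.mem_insert _ _))))))))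
  have mem10 : (c (FreeGroup.of .b) (FreeGroup.of .b1)) ∈ rels p v := by
    unfold rels
    exact Set.mem_insert_of_mem _ (Set.mem_insert_of_mem _ (Set.mem_insert_of_mem _ (Set.mem_insert_of_mem _ (Set.mem_insert_of_mem _ (Set.mem_insert_of_mem _ (Set.mem_insert_of_mem _ (Set.mem_insert_of_mem _ (Set.mem_insert_of_mem _ (Set.mem_insert _ _)))))))))
  have mem11 : (c (FreeGroup.of .b) (FreeGroup.of .b2)) ∈ rels p v := by
    unfold rels
    exact Set.mem_insert_of_mem _ (Set.mem_insert_of_mem _ (Set.mem_insert_of_mem _ (Set.mem_insert_of_mem _ (Set.mem_insert_of_mem _ (Set.mem_insert_of_mem _ (Set.mem_insert_of_mem _ (Set.mem_insert_of_mem _ (Set.mem_insert_of_mem _ (Set.mem_insert_of_mem _ (Set.mem_insert _ _))))))))))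
  have mem12 : (c (FreeGroup.of .b) (FreeGroup.of .g)) ∈ rels p v := by
    unfold rels
    exact Set.mem_insert_of_mem _ (Set.mem_insert_of_mem _ (Set.mem_insert_of_mem _ (Set.mem_insert_of_mem _ (Set.mem_insert_of_mem _ (Set.mem_insert_of_mem _ (Set.mem_insert_of_mem _ (Set.mem_insert_of_mem _ (Set.mem_insert_of_mem _ (Set.mem_insert_of_mem _ (Set.mem_insert_of_mem _ (Set.mem_insert _ _)))))))))))
  have mem13 : (c (FreeGroup.of .b1) (FreeGroup.of .b2)) ∈ rels p v := by
    unfold rels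
    exact Set.mem_insert_of_mem _ (Set.mem_insert_of_mem _ (Set.mem_insert_of_mem _ (Set.mem_insert_of_mem _ (Set.mem_insert_of_mem _ (Set.mem_insert_of_mem _ (Set.mem_insert_of_mem _ (Set.mem_insert_of_mem _ (Set.mem_insert_of_mem _ (Set.mem_insert_of_mem _ (Set.mem_insert_of_mem _ (Set.mem_insert_of_mem _ (Set.mem_insert _ _))))))))))))
  have mem14 : (c (FreeGroup.of .b1) (FreeGroup.of .g)) ∈ rels p v := by
    unfold rels
    exact Set.mem_insert_of_mem _ (Set.mem_insert_of_mem _ (Set.mem_insert_of_mem _ (Set.mem_insert_of_mem _ (Set.mem_insert_of_mem _ (Set.mem_insert_of_mem _ (Set.mem_insert_of_mem _ (Set.mem_insert_of_mem _ (Set.mem_insert_of_mem _ (Set.mem_insert_of_mem _ (Set.mem_insert_of_mem _ (Set.mem_insert_of_mem _ (Set.mem_insert_of_mem _ (Set.mem_insert _ _)))))))))))))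
  have mem15 : (c (FreeGroup.of .b2) (FreeGroup.of .g)) ∈ rels p v := by
    unfold rels
    exact Set.mem_insert_of_mem _ (Set.mem_insert_of_mem _ (Set.mem_insert_of_mem _ (Set.mem_insert_of_mem _ (Set.mem_insert_of_mem _ (Set.mem_insert_of_mem _ (Set.mem_insert_of_mem _ (Set.mem_insert_of_mem _ (Set.mem_insert_of_mem _ (Set.mem_insert_of_mem _ (Set.mem_insert_of_mem _ (Set.mem_insert_of_mem _ (Set.mem_insert_of_mem _ (Set.mem_insert_of_mem _ (Set.mem_insert _ _))))))))))))))
  have mem16 : ((FreeGroup.of Gen.a1) ^ p) ∈ rels p v := by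
    unfold rels
    exact Set.mem_insert_of_mem _ (Set.mem_insert_of_mem _ (Set.mem_insert_of_mem _ (Set.mem_insert_of_mem _ (Set.mem_insert_of_mem _ (Set.mem_insert_of_mem _ (Set.mem_insert_of_mem _ (Set.mem_insert_of_mem _ (Set.mem_insert_of_mem _ (Set.mem_insert_of_mem _ (Set.mem_insert_of_mem _ (Set.mem_insert_of_mem _ (Set.mem_insert_of_mem _ (Set.mem_insert_of_mem _ (Set.mem_insert_of_mem _ (Set.mem_insert _ _)))))))))))))))
  have mem17 : ((FreeGroup.of Gen.a2) ^ p) ∈ rels p v := by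
    unfold rels
    exact Set.mem_insert_of_mem _ (Set.mem_insert_of_mem _ (Set.mem_insert_of_mem _ (Set.mem_insert_of_mem _ (Set.mem_insert_of_mem _ (Set.mem_insert_of_mem _ (Set.mem_insert_of_mem _ (Set.mem_insert_of_mem _ (Set.mem_insert_of_mem _ (Set.mem_insert_of_mem _ (Set.mem_insert_of_mem _ (Set.mem_insert_of_mem _ (Set.mem_insert_of_mem _ (Set.mem_insert_of_mem _ (Set.mem_insert_of_mem _ (Set.mem_insert_of_mem _ (Set.mem_insert _ _))))))))))))))))
  have mem18 : ((FreeGroup.of Gen.b) ^ p) ∈ rels p v := by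
    unfold rels
    exact Set.mem_insert_of_mem _ (Set.mem_insert_of_mem _ (Set.mem_insert_of_mem _ (Set.mem_insert_of_mem _ (Set.mem_insert_of_mem _ (Set.mem_insert_of_mem _ (Set.mem_insert_of_mem _ (Set.mem_insert_of_mem _ (Set.mem_insert_of_mem _ (Set.mem_insert_of_mem _ (Set.mem_insert_of_mem _ (Set.mem_insert_of_mem _ (Set.mem_insert_of_mem _ (Set.mem_insert_of_mem _ (Set.mem_insert_of_mem _ (Set.mem_insert_of_mem _ (Set.mem_insert_of_mem _ (Set.mem_insert _ _)))))))))))))))))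
  have mem19 : ((FreeGroup.of Gen.b1) ^ p) ∈ rels p v := by
    unfold rels
    exact Set.mem_insert_of_mem _ (Set.mem_insert_of_mem _ (Set.mem_insert_of_mem _ (Set.mem_insert_of_mem _ (Set.mem_insert_of_mem _ (Set.mem_insert_of_mem _ (Set.mem_insert_of_mem _ (Set.mem_insert_of_mem _ (Set.mem_insert_of_mem _ (Set.mem_insert_of_mem _ (Set.mem_insert_of_mem _ (Set.mem_insert_of_mem _ (Set.mem_insert_of_mem _ (Set.mem_insert_of_mem _ (Set.mem_insert_of_mem _ (Set.mem_insert_of_mem _ (Set.mem_insert_of_mem _ (Set.mem_insert_of_mem _ (Set.mem_insert _ _))))))))))))))))))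
  have mem20 : ((FreeGroup.of Gen.b2) ^ p) ∈ rels p v := by
    unfold rels
    exact Set.mem_insert_of_mem _ (Set.mem_insert_of_mem _ (Set.mem_insert_of_mem _ (Set.mem_insert_of_mem _ (Set.mem_insert_of_mem _ (Set.mem_insert_of_mem _ (Set.mem_insert_of_mem _ (Set.mem_insert_of_mem _ (Set.mem_insert_of_mem _ (Set.mem_insert_of_mem _ (Set.mem_insert_of_mem _ (Set.mem_insert_of_mem _ (Set.mem_insert_of_mem _ (Set.mem_insert_of_mem _ (Set.mem_insert_of_mem _ (Set.mem_insert_of_mem _ (Set.mem_insert_of_mem _ (Set.mem_insert_of_mem _ (Set.mem_insert_of_mem _ (Set.mem_insert _ _)))))))))))))))))))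
  have mem21 : ((FreeGroup.of Gen.g) ^ p) ∈ rels p v := by
    unfold rels
    exact Set.mem_insert_of_mem _ (Set.mem_insert_of_mem _ (Set.mem_insert_of_mem _ (Set.mem_insert_of_mem _ (Set.mem_insert_of_mem _ (Set.mem_insert_of_mem _ (Set.mem_insert_of_mem _ (Set.mem_insert_of_mem _ (Set.mem_insert_of_mem _ (Set.mem_insert_of_mem _ (Set.mem_insert_of_mem _ (Set.mem_insert_of_mem _ (Set.mem_insert_of_mem _ (Set.mem_insert_of_mem _ (Set.mem_insert_of_mem _ (Set.mem_insert_of_mem _ (Set.mem_insert_of_mem _ (Set.mem_insert_of_mem _ (Set.mem_insert_of_mem _ (Set.mem_insert_of_mem _ (Set.mem_singleton _))))))))))))))))))))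
  have R1 : K a1 a2 = bb := by
    have h := hmk _ mem1
    rw [_root_.map_mul, _root_.map_inv, hcK] at h
    exact mul_inv_eq_one.mp h
  have R2 : K bb a1 = b1 := by
    have h := hmk _ mem2
    rw [_root_.map_mul, _root_.map_inv, hcK] at h
    exact mul_inv_eq_one.mp h
  have R3 : K bb a2 = b2 := by
    have h := hmk _ mem3
    rw [_root_.map_mul, _root_.map_inv, hcK] at h
    exact mul_inv_eq_one.mp h
  have R4 : K a1 b1 = gg := by
    have h := hmk _ mem4
    rw [_root_.map_mul, _root_.map_inv, hcK] at h
    exact mul_inv_eq_one.mp h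
  have R5 : K a2 b2 = gg ^ (-(v : ℤ)) := by
    have h := hmk _ mem5
    rw [_root_.map_mul, _root_.map_inv, hcK, _root_.map_zpow] at h
    exact mul_inv_eq_one.mp h
  have R6 : Commute a1 b2 := by
    have h := hmk _ mem6; rw [hcK] at h; exact K_eq_one_iff.mp h
  have R7 : Commute a1 gg := by
    have h := hmk _ mem7; rw [hcK] at h; exact K_eq_one_iff.mp h
  have R8 : Commute a2 b1 := by
    have h := hmk _ mem8; rw [hcK] at h; exact K_eq_one_iff.mp h
  have R9 : Commute a2 gg := by
    have h := hmk _ mem9; rw [hcK] at h; exact K_eq_one_iff.mp h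
  have R10 : Commute bb b1 := by
    have h := hmk _ mem10; rw [hcK] at h; exact K_eq_one_iff.mp h
  have R11 : Commute bb b2 := by
    have h := hmk _ mem11; rw [hcK] at h; exact K_eq_one_iff.mp h
  have R12 : Commute bb gg := by
    have h := hmk _ mem12; rw [hcK] at h; exact K_eq_one_iff.mp h
  have R13 : Commute b1 b2 := by
    have h := hmk _ mem13; rw [hcK] at h; exact K_eq_one_iff.mp h
  have R14 : Commute b1 gg := by
    have h := hmk _ mem14; rw [hcK] at h; exact K_eq_one_iff.mp h
  have R15 : Commute b2 gg := by
    have h := hmk _ mem15; rw [hcK] at h; exact K_eq_one_iff.mp h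
  have R16 : a1 ^ p = 1 := by
    have h := hmk _ mem16; rw [_root_.map_pow] at h; exact h
  have R17 : a2 ^ p = 1 := by
    have h := hmk _ mem17; rw [_root_.map_pow] at h; exact h
  have R18 : bb ^ p = 1 := by
    have h := hmk _ mem18; rw [_root_.map_pow] at h; exact h
  have R19 : b1 ^ p = 1 := by
    have h := hmk _ mem19; rw [_root_.map_pow] at h; exact h
  have R20 : b2 ^ p = 1 := by
    have h := hmk _ mem20; rw [_root_.map_pow] at h; exact h
  have R21 : gg ^ p = 1 := by
    have h := hmk _ mem21; rw [_root_.map_pow] at h; exact h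
  -- gg is central in G
  have Gcent : ∀ t : PresentedGroup (rels p v), Commute gg t := by
    intro t
    have ht : t ∈ Subgroup.centralizer {gg} := by
      refine PresentedGroup.generated_by (rels p v) _ ?_ t
      intro j
      rw [Subgroup.mem_centralizer_iff]
      intro y hy
      rw [Set.mem_singleton_iff] at hy
      subst hy
      cases j with
      | a1 => exact R7.symm.eq
      | a2 => exact R9.symm.eq
      | b => exact R12.symm.eq
      | b1 => exact R14.symm.eq
      | b2 => exact R15.symm.eq
      | g => rfl
    exact Subgroup.mem_centralizer_iff.mp ht gg (Set.mem_singleton _)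
  have hpne : p ≠ 0 := hp.pos.ne'
  -- lifts of the generators a1 a2 with trivial p-th power
  set X1 : Ext D := ⟨0, a1⟩ with hX1
  obtain ⟨x1, hx1⟩ := QZ.exists_nsmul p hpne (-(X1^p).fst)
  set A1 : Ext D := Ext.ctr x1 * X1 with hA1
  have hXp1 : X1^p = Ext.ctr ((X1^p).fst) := by
    refine Ext.ext rfl ?_
    show (X1^p).snd = 1
    have h0 : (X1^p).snd = (Ext.π X1)^p := _root_.map_pow Ext.π X1 p
    rw [h0]
    show a1 ^ p = 1
    exact R16
  have hA1p : A1^p = 1 := by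
    rw [hA1, Ext.ctr_mul_pow, hXp1, Ext.ctr_mul, hx1, neg_add_cancel]
    rfl
  set X2 : Ext D := ⟨0, a2⟩ with hX2
  obtain ⟨x2, hx2⟩ := QZ.exists_nsmul p hpne (-(X2^p).fst)
  set A2 : Ext D := Ext.ctr x2 * X2 with hA2
  have hXp2 : X2^p = Ext.ctr ((X2^p).fst) := by
    refine Ext.ext rfl ?_
    show (X2^p).snd = 1
    have h0 : (X2^p).snd = (Ext.π X2)^p := _root_.map_pow Ext.π X2 p
    rw [h0]
    show a2 ^ p = 1
    exact R17
  have hA2p : A2^p = 1 := by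
    rw [hA2, Ext.ctr_mul_pow, hXp2, Ext.ctr_mul, hx2, neg_add_cancel]
    rfl
  have sA1 : Ext.π A1 = a1 := one_mul a1
  have sA2 : Ext.π A2 = a2 := one_mul a2
  -- the lifts of the other generators
  set B : Ext D := K A1 A2 with hB
  set B1 : Ext D := K B A1 with hB1E
  set B2 : Ext D := K B A2 with hB2E
  set CC : Ext D := K A1 B1 with hCC
  have sB : Ext.π B = bb := by rw [hB, K_map, sA1, sA2, R1]
  have sB1 : Ext.π B1 = b1 := by rw [hB1E, K_map, sB, sA1, R2]
  have sB2 : Ext.π B2 = b2 := by rw [hB2E, K_map, sB, sA2, R3]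
  have sCC : Ext.π CC = gg := by rw [hCC, K_map, sA1, sB1, R4]
  -- lifting commutation relations
  have EC : ∀ t : Ext D, Commute CC t := fun t => Ext.keyE (by rw [sCC]; exact Gcent _)
  have E6 : Commute A1 B2 := Ext.keyE (by rw [sA1, sB2]; exact R6)
  have E8 : Commute A2 B1 := Ext.keyE (by rw [sA2, sB1]; exact R8)
  have E10 : Commute B B1 := Ext.keyE (by rw [sB, sB1]; exact R10)
  have E11 : Commute B B2 := Ext.keyE (by rw [sB, sB2]; exact R11)
  have E13 : Commute B1 B2 := Ext.keyE (by rw [sB1, sB2]; exact R13)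
  -- p-th powers of the lifts are trivial
  have sBp : Ext.π (B^p) = 1 := by rw [_root_.map_pow, sB, R18]
  have EB1p : B1^p = 1 := by
    have h1 : K (B^p) A1 = B1^p := K_pow_left E10 p
    have h2 : Commute (B^p) A1 := Ext.keyE (by rw [sBp, sA1]; exact Commute.one_left _)
    rw [← h1]
    exact K_eq_one_iff.mpr h2
  have EB2p : B2^p = 1 := by
    have h1 : K (B^p) A2 = B2^p := K_pow_left E11 p
    have h2 : Commute (B^p) A2 := Ext.keyE (by rw [sBp, sA2]; exact Commute.one_left _)
    rw [← h1]
    exact K_eq_one_iff.mpr h2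
  have ECp : CC^p = 1 := by
    have h1 : K A1 (B1^p) = CC^p := K_pow_right (fun t => EC t) p
    have h2 : Commute A1 (B1^p) := Ext.keyE (by
      rw [_root_.map_pow, sB1, R19, sA1]; exact Commute.one_right _)
    rw [← h1]
    exact K_eq_one_iff.mpr h2
  have EBp : B^p = 1 := by
    have hbbArg : Commute (K A1 A2) (K (K A1 A2) A1) := by
      rw [← hB, ← hB1E]; exact E10
    have hccArg : ∀ t, Commute (K A1 (K (K A1 A2) A1)) t := by
      intro t
      rw [← hB, ← hB1E, ← hCC]
      exact EC t
    have h4 := K_pow_left₃ hbbArg hccArg p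
    rw [hA1p, K_one_left, ← hB, ← hB1E, ← hCC] at h4
    obtain ⟨m2, hm2⟩ : p ∣ p.choose 2 := hp.dvd_choose_self (by norm_num) (by omega)
    obtain ⟨m3, hm3⟩ : p ∣ p.choose 3 := hp.dvd_choose_self (by norm_num) h3
    rw [hm2, hm3, pow_mul, pow_mul, EB1p, ECp, one_pow, one_pow, inv_one, mul_one, mul_one] at h4
    exact h4.symm
  -- the last relation
  have hKa1b1v : K a1 (b1^v) = gg^v := by
    have h := K_pow_right (x := a1) (u := b1) (fun t => by rw [R4]; exact Gcent t) v
    rw [h, R4]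
  have hGcomm : Commute (a1*a2) (b1^v * b2) := by
    refine K_eq_one_iff.mp ?_
    rw [K_mul_mul R6 (R8.pow_right v) (fun t => by rw [hKa1b1v]; exact (Gcent t).pow_left v)]
    rw [hKa1b1v, R5, ← zpow_natCast gg v, ← zpow_add, add_neg_cancel, zpow_zero]
  have hKA1B1v : K A1 (B1^v) = CC^v := by
    have h := K_pow_right (x := A1) (u := B1) (fun t => by rw [← hCC]; exact EC t) v
    rw [h, ← hCC]
  have EZ : K A2 B2 = CC ^ (-(v:ℤ)) := by
    have hπm1 : Ext.π (A1*A2) = a1*a2 := by rw [_root_.map_mul, sA1, sA2]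
    have hπm2 : Ext.π (B1^v*B2) = b1^v*b2 := by rw [_root_.map_mul, _root_.map_pow, sB1, sB2]
    have hEcomm : Commute (A1*A2) (B1^v*B2) := Ext.keyE (by
      rw [hπm1, hπm2]; exact hGcomm)
    have h5 : K (A1*A2) (B1^v*B2) = K A1 (B1^v) * K A2 B2 :=
      K_mul_mul E6 (E8.pow_right v) (fun t => by rw [hKA1B1v]; exact (EC t).pow_left v)
    have h6 : K (A1*A2) (B1^v*B2) = 1 := K_eq_one_iff.mpr hEcomm
    rw [h5, hKA1B1v] at h6
    have h7 : K A2 B2 = (CC^v)⁻¹ := (inv_eq_of_mul_eq_one_right h6).symm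
    rw [h7, ← zpow_natCast CC v]
    exact (zpow_neg CC (v:ℤ)).symm
  -- the splitting homomorphism
  set Fimg : Gen → Ext D := fun x => match x with
    | .a1 => A1 | .a2 => A2 | .b => B | .b1 => B1 | .b2 => B2 | .g => CC
    with hFimg
  have hlift : ∀ r ∈ rels p v, FreeGroup.lift Fimg r = 1 := by
    intro r hr
    simp only [rels, Set.mem_insert_iff, Set.mem_singleton_iff] at hr
    rcases hr with rfl|rfl|rfl|rfl|rfl|rfl|rfl|rfl|rfl|rfl|rfl|rfl|rfl|rfl|rfl|rfl|rfl|rfl|rfl|rfl|rfl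
    · -- [a1,a2] = b
      simp only [c, _root_.map_mul, _root_.map_inv, FreeGroup.lift_apply_of]
      show K A1 A2 * B⁻¹ = 1
      rw [← hB]; exact mul_inv_cancel B
    · simp only [c, _root_.map_mul, _root_.map_inv, FreeGroup.lift_apply_of]
      show K B A1 * B1⁻¹ = 1
      rw [← hB1E]; exact mul_inv_cancel B1
    · simp only [c, _root_.map_mul, _root_.map_inv, FreeGroup.lift_apply_of]
      show K B A2 * B2⁻¹ = 1
      rw [← hB2E]; exact mul_inv_cancel B2
    · simp only [c, _root_.map_mul, _root_.map_inv, FreeGroup.lift_apply_of]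
      show K A1 B1 * CC⁻¹ = 1
      rw [← hCC]; exact mul_inv_cancel CC
    · simp only [c, _root_.map_mul, _root_.map_inv, _root_.map_zpow, FreeGroup.lift_apply_of]
      show K A2 B2 * (CC ^ (-(v:ℤ)))⁻¹ = 1
      rw [EZ]; exact mul_inv_cancel _
    · simp only [c, _root_.map_mul, _root_.map_inv, FreeGroup.lift_apply_of]
      show K A1 B2 = 1
      exact K_eq_one_iff.mpr E6
    · simp only [c, _root_.map_mul, _root_.map_inv, FreeGroup.lift_apply_of]
      show K A1 CC = 1
      exact K_eq_one_iff.mpr (EC A1).symm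
    · simp only [c, _root_.map_mul, _root_.map_inv, FreeGroup.lift_apply_of]
      show K A2 B1 = 1
      exact K_eq_one_iff.mpr E8
    · simp only [c, _root_.map_mul, _root_.map_inv, FreeGroup.lift_apply_of]
      show K A2 CC = 1
      exact K_eq_one_iff.mpr (EC A2).symm
    · simp only [c, _root_.map_mul, _root_.map_inv, FreeGroup.lift_apply_of]
      show K B B1 = 1
      exact K_eq_one_iff.mpr E10
    · simp only [c, _root_.map_mul, _root_.map_inv, FreeGroup.lift_apply_of]
      show K B B2 = 1
      exact K_eq_one_iff.mpr E11
    · simp only [c, _root_.map_mul, _root_.map_inv, FreeGroup.lift_apply_of]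
      show K B CC = 1
      exact K_eq_one_iff.mpr (EC B).symm
    · simp only [c, _root_.map_mul, _root_.map_inv, FreeGroup.lift_apply_of]
      show K B1 B2 = 1
      exact K_eq_one_iff.mpr E13
    · simp only [c, _root_.map_mul, _root_.map_inv, FreeGroup.lift_apply_of]
      show K B1 CC = 1
      exact K_eq_one_iff.mpr (EC B1).symm
    · simp only [c, _root_.map_mul, _root_.map_inv, FreeGroup.lift_apply_of]
      show K B2 CC = 1
      exact K_eq_one_iff.mpr (EC B2).symm
    · simp only [_root_.map_pow, FreeGroup.lift_apply_of]
      show A1 ^ p = 1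
      exact hA1p
    · simp only [_root_.map_pow, FreeGroup.lift_apply_of]
      show A2 ^ p = 1
      exact hA2p
    · simp only [_root_.map_pow, FreeGroup.lift_apply_of]
      show B ^ p = 1
      exact EBp
    · simp only [_root_.map_pow, FreeGroup.lift_apply_of]
      show B1 ^ p = 1
      exact EB1p
    · simp only [_root_.map_pow, FreeGroup.lift_apply_of]
      show B2 ^ p = 1
      exact EB2p
    · simp only [_root_.map_pow, FreeGroup.lift_apply_of]
      show CC ^ p = 1
      exact ECp
  set φ : PresentedGroup (rels p v) →* Ext D := PresentedGroup.toGroup hlift with hφ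
  have hsec : ∀ g : PresentedGroup (rels p v), Ext.π (φ g) = g := by
    have hext : Ext.π.comp φ = MonoidHom.id (PresentedGroup (rels p v)) := by
      refine PresentedGroup.ext ?_
      intro x
      show Ext.π (φ (PresentedGroup.of x)) = PresentedGroup.of x
      rw [hφ, PresentedGroup.toGroup.of]
      cases x with
      | a1 => exact sA1
      | a2 => exact sA2
      | b => exact sB
      | b1 => exact sB1
      | b2 => exact sB2
      | g => exact sCC
    intro g
    exact DFunLike.congr_fun hext g
  -- conclude: f is a coboundary
  refine ⟨fun g => -(φ g).fst + f 1 1, ?_⟩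
  intro g h
  have hDf : ∀ g h : PresentedGroup (rels p v), D.f g h = f g h - f 1 1 := by
    intro g h; rw [hD]
  have hmul2 : (φ (g*h)).fst = (φ g).fst + (φ h).fst + D.f g h := by
    have h0 := congrArg Ext.fst (_root_.map_mul φ g h)
    rw [show ((φ g) * (φ h)).fst
        = (φ g).fst + (φ h).fst + D.f (φ g).snd (φ h).snd from rfl] at h0
    have hg : (φ g).snd = g := hsec g
    have hh : (φ h).snd = h := hsec h
    rw [hg, hh] at h0
    exact h0
  have key : D.f g h = (φ (g*h)).fst - (φ g).fst - (φ h).fst := by rw [hmul2]; abel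
  show f g h = (-(φ h).fst + f 1 1) - (-(φ (g*h)).fst + f 1 1) + (-(φ g).fst + f 1 1)
  have hfgh : f g h = D.f g h + f 1 1 := by rw [hDf]; abel
  rw [hfgh, key]
  abel

end Stmt14
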